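/- Let G_t ⊆ G_{t+1} be finite trees where each vertex of G_{t+1} not in G_t is adjacent to a vertex of G_t. If the minimum eccentricity of G_{t+1} is strictly less than the eccentricity in G_{t+1} of any Jordan center of G_t (the center 'moves'), then the minimum eccentricity of G_{t+1} equals the minimum eccentricity of G_t. -/
import Mathlib

open SimpleGraph Finset

section aux

variable {V : Type*} {T : SimpleGraph V}

/-- In a tree, every path realizes the distance. -/
private lemma tree_path_length (hT : T.IsTree) {a b : V}
    (p : T.Walk a b) (hp : p.IsPath) : p.length = T.dist a b := by
  obtain ⟨q, hq, hql⟩ := hT.isConnected.exists_path_of_dist a b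
  have h : (⟨p, hp⟩ : T.Path a b) = ⟨q, hq⟩ := hT.IsAcyclic.path_unique _ _
  have h' : p = q := congrArg Subtype.val h
  rw [h', hql]

/-- A vertex outside `S` has at most one neighbor in `S`. -/
private lemma uniq_nbr (hT : T.IsTree) {S : Finset V}
    (hconv : ∀ u v w : V, u ∈ S → w ∈ S → T.dist u v + T.dist v w = T.dist u w → v ∈ S)
    {x y₁ y₂ : V} (hx : x ∉ S) (h₁ : y₁ ∈ S) (h₂ : y₂ ∈ S)
    (a₁ : T.Adj x y₁) (a₂ : T.Adj x y₂) : y₁ = y₂ := by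
  by_contra hne
  have hxy₁ : x ≠ y₁ := a₁.ne
  have hxy₂ : x ≠ y₂ := a₂.ne
  have hp : (Walk.cons a₁.symm (Walk.cons a₂ Walk.nil)).IsPath := by
    simp [Walk.cons_isPath_iff, hxy₁.symm, hne, hxy₂]
  have hd : T.dist y₁ y₂ = 2 := by
    have := tree_path_length hT _ hp
    simpa using this.symm
  have h1 : T.dist y₁ x = 1 := dist_eq_one_iff_adj.mpr a₁.symm
  have h2 : T.dist x y₂ = 1 := dist_eq_one_iff_adj.mpr a₂
  exact hx (hconv y₁ x y₂ h₁ h₂ (by rw [h1, h2, hd]))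

/-- No two vertices outside `S` are adjacent. -/
private lemma no_new_adj (hT : T.IsTree) {S : Finset V}
    (hconv : ∀ u v w : V, u ∈ S → w ∈ S → T.dist u v + T.dist v w = T.dist u w → v ∈ S)
    (hnew : ∀ x : V, x ∉ S → ∃ y ∈ S, T.Adj x y)
    {x₁ x₂ : V} (h₁ : x₁ ∉ S) (h₂ : x₂ ∉ S) (hadj : T.Adj x₁ x₂) : False := by
  obtain ⟨y₁, hy₁, a₁⟩ := hnew x₁ h₁
  obtain ⟨y₂, hy₂, a₂⟩ := hnew x₂ h₂
  have hx12 : x₁ ≠ x₂ := hadj.ne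
  have hx1y1 : x₁ ≠ y₁ := a₁.ne
  have hx2y2 : x₂ ≠ y₂ := a₂.ne
  have hx1y2 : x₁ ≠ y₂ := fun h => h₁ (h ▸ hy₂)
  have hx2y1 : x₂ ≠ y₁ := fun h => h₂ (h ▸ hy₁)
  by_cases hy : y₁ = y₂
  · subst hy
    -- two distinct paths from x₂ to y₁ of lengths 1 and 2
    have hp : (Walk.cons hadj.symm (Walk.cons a₁ Walk.nil)).IsPath := by
      simp [Walk.cons_isPath_iff, hx12.symm, hx2y1, hx1y1]
    have hd2 : T.dist x₂ y₁ = 2 := by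
      have := tree_path_length hT _ hp
      simpa using this.symm
    have hd1 : T.dist x₂ y₁ = 1 := dist_eq_one_iff_adj.mpr a₂
    omega
  · -- path y₁ - x₁ - x₂ - y₂ of length 3
    have hp : (Walk.cons a₁.symm (Walk.cons hadj (Walk.cons a₂ Walk.nil))).IsPath := by
      simp [Walk.cons_isPath_iff, hx12, hx1y1.symm, hx2y2, hx1y2, hx2y1.symm, hy, Ne.symm hy]
    have hd3 : T.dist y₁ y₂ = 3 := by
      have := tree_path_length hT _ hp
      simpa using this.symm
    have hp2 : (Walk.cons hadj (Walk.cons a₂ Walk.nil)).IsPath := by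
      simp [Walk.cons_isPath_iff, hx12, hx2y2, hx1y2]
    have hd2 : T.dist x₁ y₂ = 2 := by
      have := tree_path_length hT _ hp2
      simpa using this.symm
    have hd1 : T.dist y₁ x₁ = 1 := dist_eq_one_iff_adj.mpr a₁.symm
    exact h₁ (hconv y₁ x₁ y₂ hy₁ hy₂ (by rw [hd1, hd2, hd3]))

/-- Key step: if `v ∉ S` with `S`-neighbor `y`, then `y` is closer to all of `S`. -/
private lemma nbr_closer (hT : T.IsTree) {S : Finset V}
    (hconv : ∀ u v w : V, u ∈ S → w ∈ S → T.dist u v + T.dist v w = T.dist u w → v ∈ S)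
    (hnew : ∀ x : V, x ∉ S → ∃ y ∈ S, T.Adj x y)
    {v y z : V} (hv : v ∉ S) (hy : y ∈ S) (hadj : T.Adj v y) (hz : z ∈ S) :
    T.dist y z ≤ T.dist v z := by
  have hne : v ≠ z := fun h => hv (h ▸ hz)
  obtain ⟨p, hp, hl⟩ := hT.isConnected.exists_path_of_dist v z
  obtain ⟨x, h, q, rfl⟩ := Walk.exists_eq_cons_of_ne hne p
  have hxS : x ∈ S := by
    by_contra hxS
    exact no_new_adj hT hconv hnew hv hxS h
  have hyx : y = x := uniq_nbr hT hconv hv hy hxS hadj h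
  subst hyx
  have := dist_le q
  simp only [Walk.length_cons] at hl
  omega

end aux

/-- One growth step: `T` is the finite tree `G_{t+1}`, `S` the vertex set of the subtree `G_t`
(nonempty, path-closed), every new vertex adjacent to an old one.  If the minimum eccentricity
of `G_{t+1}` is strictly smaller than the eccentricity in `G_{t+1}` of every Jordan center of
`G_t` (the center moves), then the minimum eccentricity of `G_{t+1}` equals the minimum
eccentricity of `G_t`. -/
theorem stmt6 {V : Type*} [Fintype V] [Nonempty V] (T : SimpleGraph V) (hT : T.IsTree)
    (S : Finset V) (hS : S.Nonempty)
    (hconv : ∀ u v w : V, u ∈ S → w ∈ S → T.dist u v + T.dist v w = T.dist u w → v ∈ S)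
    (hnew : ∀ x : V, x ∉ S → ∃ y ∈ S, T.Adj x y)
    (hmove : ∀ c ∈ S, (∀ w ∈ S, S.sup (fun z => T.dist c z) ≤ S.sup (fun z => T.dist w z)) →
      Finset.univ.inf' Finset.univ_nonempty (fun v => Finset.univ.sup (fun z => T.dist v z)) <
        Finset.univ.sup (fun z => T.dist c z)) :
    Finset.univ.inf' Finset.univ_nonempty (fun v => Finset.univ.sup (fun z => T.dist v z)) =
      S.inf' hS (fun v => S.sup (fun z => T.dist v z)) := by
  apply le_antisymm
  · -- r ≤ r_S
    obtain ⟨c, hcS, hc⟩ := Finset.exists_mem_eq_inf' hS (fun v => S.sup (fun z => T.dist v z))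
    have hmin : ∀ w ∈ S, S.sup (fun z => T.dist c z) ≤ S.sup (fun z => T.dist w z) := by
      intro w hw
      rw [← hc]
      exact Finset.inf'_le _ hw
    have hlt := hmove c hcS hmin
    have hub : Finset.univ.sup (fun z => T.dist c z) ≤ S.sup (fun z => T.dist c z) + 1 := by
      apply Finset.sup_le
      intro z _
      by_cases hz : z ∈ S
      · exact le_trans (Finset.le_sup hz) (Nat.le_succ _)
      · obtain ⟨y, hy, a⟩ := hnew z hz
        have htri : T.dist c z ≤ T.dist c y + T.dist y z := hT.isConnected.dist_triangle
        have h1 : T.dist y z = 1 := dist_eq_one_iff_adj.mpr a.symm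
        have h2 : T.dist c y ≤ S.sup (fun z => T.dist c z) := Finset.le_sup hy
        omega
    rw [hc]
    omega
  · -- r_S ≤ r
    obtain ⟨v, _, hv⟩ := Finset.exists_mem_eq_inf' Finset.univ_nonempty
      (fun v => Finset.univ.sup (fun z => T.dist v z))
    rw [hv]
    by_cases hvS : v ∈ S
    · exact le_trans (Finset.inf'_le _ hvS) (Finset.sup_mono (Finset.subset_univ S))
    · obtain ⟨y, hy, a⟩ := hnew v hvS
      refine le_trans (Finset.inf'_le _ hy) (Finset.sup_le ?_)
      intro z hz
      exact le_trans (nbr_closer hT hconv hnew hvS hy a hz)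
        (Finset.le_sup (Finset.mem_univ z))
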